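/- arXiv:2401.14923 — 3 statements merged into one kernel-verified Lean document; each statement's English description precedes it below -/
import Mathlib

section
/- If a sequence satisfies V(N) = r_g and the recurrence V(n) = r_b + γ·(p·V(n+1) + (1-p)·V(n)) for n < N, with 0 ≤ γ < 1, 0 < p ≤ 1, then V(N - δ) = r_g·(γp/z)^δ + r_b·(1 - (γp/z)^δ)/(1 - γ), where z = 1 - γ(1-p). -/
theorem stmt_0 (N : ℕ) (γ p r_g r_b : ℝ) (V : ℕ → ℝ)
    (hγ0 : 0 ≤ γ) (hγ1 : γ < 1) (hp0 : 0 < p) (hp1 : p ≤ 1)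
    (hVN : V N = r_g)
    (hrec : ∀ n < N, V n = r_b + γ * (p * V (n + 1) + (1 - p) * V n)) :
    ∀ δ ≤ N, V (N - δ) =
      r_g * (γ * p / (1 - γ * (1 - p))) ^ δ +
      r_b * ((1 - (γ * p / (1 - γ * (1 - p))) ^ δ) / (1 - γ)) := by
  have hz : 0 < 1 - γ * (1 - p) := by nlinarith
  have hγ1' : (0:ℝ) < 1 - γ := by linarith
  intro δ
  induction δ with
  | zero => intro _; simp [hVN]
  | succ d ih =>
    intro h
    have hV := hrec (N - (d + 1)) (by omega)
    have hstep : N - (d + 1) + 1 = N - d := by omega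
    rw [hstep] at hV
    have ihd := ih (by omega)
    rw [ihd] at hV
    have hkey : V (N - (d + 1)) * (1 - γ * (1 - p)) =
        r_b + γ * p * (r_g * (γ * p / (1 - γ * (1 - p))) ^ d +
          r_b * ((1 - (γ * p / (1 - γ * (1 - p))) ^ d) / (1 - γ))) := by
      nlinarith [hV]
    have hVval : V (N - (d + 1)) =
        (r_b + γ * p * (r_g * (γ * p / (1 - γ * (1 - p))) ^ d +
          r_b * ((1 - (γ * p / (1 - γ * (1 - p))) ^ d) / (1 - γ)))) / (1 - γ * (1 - p)) := by
      rw [eq_div_iff hz.ne']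
      linarith [hkey]
    rw [hVval, pow_succ]
    field_simp
    ring
end

section
/- If a sequence satisfies V(0) = r_d·γ·q/(1 - γ(1-q)) and the recurrence V(n) = γ·p_d·r_d + p_ℓ·r_ℓ + γ·p_ℓ·V(n-1) + γ·(1 - p_ℓ - p_d)·V(n) for n ≥ 1, with 0 ≤ γ < 1, p_d, p_ℓ ≥ 0, p_d + p_ℓ ≤ 1, 0 < q ≤ 1, then V(n) = r_d·(γq/v)·(γp_ℓ/u)^n + (γ·p_d·r_d + p_ℓ·r_ℓ)·(1 - (γp_ℓ/u)^n)/(1 - γ(1 - p_d)), where v = 1 - γ(1-q) and u = 1 - γ(1 - p_d - p_ℓ). -/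
theorem stmt_7 (γ p_d p_ell q r_d r_ell : ℝ) (V : ℕ → ℝ)
    (hγ0 : 0 ≤ γ) (hγ1 : γ < 1)
    (hpd : 0 ≤ p_d) (hpl : 0 ≤ p_ell) (hsum : p_d + p_ell ≤ 1)
    (hq0 : 0 < q) (hq1 : q ≤ 1)
    (hV0 : V 0 = r_d * γ * q / (1 - γ * (1 - q)))
    (hrec : ∀ n : ℕ, 1 ≤ n →
      V n = γ * p_d * r_d + p_ell * r_ell + γ * p_ell * V (n - 1) +
        γ * (1 - p_ell - p_d) * V n) :
    ∀ n : ℕ,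
      V n = r_d * (γ * q / (1 - γ * (1 - q))) *
              (γ * p_ell / (1 - γ * (1 - p_d - p_ell))) ^ n +
            (γ * p_d * r_d + p_ell * r_ell) *
              ((1 - (γ * p_ell / (1 - γ * (1 - p_d - p_ell))) ^ n) /
                (1 - γ * (1 - p_d))) := by
  have hu : (0:ℝ) < 1 - γ * (1 - p_d - p_ell) := by nlinarith
  have hw : (0:ℝ) < 1 - γ * (1 - p_d) := by nlinarith
  have hv : (0:ℝ) < 1 - γ * (1 - q) := by nlinarith
  intro n
  induction n with
  | zero =>
    rw [hV0, pow_zero]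
    ring
  | succ n ih =>
    have h := hrec (n + 1) (Nat.succ_le_succ (Nat.zero_le n))
    simp only [Nat.add_sub_cancel] at h
    have key : V (n+1) = (γ * p_d * r_d + p_ell * r_ell + γ * p_ell * V n) /
        (1 - γ * (1 - p_d - p_ell)) := by
      field_simp
      linarith [h]
    rw [key, ih, pow_succ]
    field_simp
    ring
end

section
/- Let 0 ≤ γ < 1, 0 < p ≤ 1, r_g > 0, r_b ≤ 0, and z = 1 - γ(1-p). Then 0 < γp/z < 1 whenever γ > 0, and consequently the function δ ↦ r_g·(γp/z)^δ + r_b·(1 - (γp/z)^δ)/(1-γ) crosses zero at most once from positive to negative as δ increases: if it is ≤ 0 at δ, it is ≤ 0 at δ+1. -/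
theorem stmt_9 (γ p r_g r_b : ℝ)
    (hγ0 : 0 ≤ γ) (hγ1 : γ < 1) (hp0 : 0 < p) (hp1 : p ≤ 1)
    (hrg : 0 < r_g) (hrb : r_b ≤ 0) :
    (0 < γ → 0 < γ * p / (1 - γ * (1 - p)) ∧ γ * p / (1 - γ * (1 - p)) < 1) ∧
    (∀ δ : ℕ,
      r_g * (γ * p / (1 - γ * (1 - p))) ^ δ +
        r_b * ((1 - (γ * p / (1 - γ * (1 - p))) ^ δ) / (1 - γ)) ≤ 0 →
      r_g * (γ * p / (1 - γ * (1 - p))) ^ (δ + 1) +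
        r_b * ((1 - (γ * p / (1 - γ * (1 - p))) ^ (δ + 1)) / (1 - γ)) ≤ 0) := by
  have hz : 0 < 1 - γ * (1 - p) := by nlinarith
  have hD : 0 < 1 - γ := by linarith
  set q := γ * p / (1 - γ * (1 - p)) with hq
  have hq0 : 0 ≤ q := div_nonneg (by positivity) hz.le
  have hq1 : q ≤ 1 := by
    rw [hq, div_le_one hz]; nlinarith
  have key : ∀ x : ℝ, r_g * x + r_b * ((1 - x) / (1 - γ))
      = (r_g - r_b / (1 - γ)) * x + r_b / (1 - γ) := by
    intro x; field_simp; ring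
  have hc : 0 ≤ r_g - r_b / (1 - γ) := by
    have : r_b / (1 - γ) ≤ 0 := div_nonpos_of_nonpos_of_nonneg hrb hD.le
    linarith
  constructor
  · intro hγ
    constructor
    · exact div_pos (by positivity) hz
    · rw [hq, div_lt_one hz]; nlinarith
  · intro δ h
    rw [key] at h ⊢
    have hpow : q ^ (δ + 1) ≤ q ^ δ :=
      pow_le_pow_of_le_one hq0 hq1 (by omega)
    nlinarith [mul_le_mul_of_nonneg_left hpow hc]
end
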